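/- Let Ā := max_{(s,a) ∈ S×A} A⋆(s,a) (attained by compactness and continuity), and for x ∈ [0, Ā] define α₀(x) := min { Â(s,a) : (s,a) ∈ S × A, A⋆(s,a) ≥ x } (this minimum is attained since the constraint set is a nonempty compact set and Â is continuous). Assume that for every s ∈ S the set {a : Â(s,a) = 0} is contained in {a : A⋆(s,a) = 0}. Then: (1) α₀(0) = 0; (2) α₀(x) > 0 for every x ∈ (0, Ā]; (3) α₀ is monotone nondecreasing on [0, Ā]; (4) Â(s,a) ≥ α₀(A⋆(s,a)) for all (s,a) ∈ S × A. -/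
import Mathlib


/-- with `Ā` the (attained) maximum of `A⋆` over `S × A`, and
`α₀(x)` the (attained) minimum of `Â` over `{(s,a) : A⋆(s,a) ≥ x}` for
`x ∈ [0, Ā]`, assuming the zeros of `Â(s,·)` are contained in the zeros of
`A⋆(s,·)` for every `s`, the function `α₀` satisfies:
(1) `α₀(0) = 0`; (2) `α₀(x) > 0` on `(0, Ā]`; (3) `α₀` is monotone
nondecreasing on `[0, Ā]`; (4) `Â(s,a) ≥ α₀(A⋆(s,a))` for all `(s,a)`. -/
theorem stmt_3 {S A : Type*} [TopologicalSpace S] [TopologicalSpace A]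
    [CompactSpace S] [CompactSpace A] [Nonempty S] [Nonempty A]
    (Astar Ahat : S × A → ℝ)
    (hAstar_cont : Continuous Astar) (hAhat_cont : Continuous Ahat)
    (hAstar_nonneg : ∀ p : S × A, 0 ≤ Astar p)
    (hAhat_nonneg : ∀ p : S × A, 0 ≤ Ahat p)
    (hAstar_zero : ∀ s : S, ∃ a : A, Astar (s, a) = 0)
    (hAhat_zero : ∀ s : S, ∃ a : A, Ahat (s, a) = 0)
    (hsubset : ∀ s : S, {a : A | Ahat (s, a) = 0} ⊆ {a : A | Astar (s, a) = 0})
    (Abar : ℝ) (hAbar : IsGreatest (Set.range Astar) Abar)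
    (α₀ : ℝ → ℝ)
    (hα₀ : ∀ x ∈ Set.Icc (0 : ℝ) Abar,
      IsLeast (Ahat '' {p : S × A | x ≤ Astar p}) (α₀ x)) :
    α₀ 0 = 0 ∧
      (∀ x ∈ Set.Ioc (0 : ℝ) Abar, 0 < α₀ x) ∧
      MonotoneOn α₀ (Set.Icc (0 : ℝ) Abar) ∧
      (∀ p : S × A, α₀ (Astar p) ≤ Ahat p) := by
  have hAbar0 : (0:ℝ) ≤ Abar := by
    obtain ⟨s⟩ := ‹Nonempty S›; obtain ⟨a⟩ := ‹Nonempty A›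
    exact le_trans (hAstar_nonneg (s,a)) (hAbar.2 ⟨(s,a), rfl⟩)
  refine ⟨?_, ?_, ?_, ?_⟩
  · have h := hα₀ 0 ⟨le_refl 0, hAbar0⟩
    obtain ⟨s⟩ := ‹Nonempty S›
    obtain ⟨a, ha⟩ := hAhat_zero s
    have h1 : α₀ 0 ≤ 0 := by
      have := h.2 ⟨(s,a), hAstar_nonneg _, ha⟩
      simpa using this
    obtain ⟨p, _, hp⟩ := h.1
    linarith [hAhat_nonneg p, hp]
  · intro x hx
    have h := hα₀ x ⟨le_of_lt hx.1, hx.2⟩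
    obtain ⟨p, hp, hpe⟩ := h.1
    rcases lt_or_eq_of_le (hAhat_nonneg p) with h' | h'
    · rwa [← hpe]
    · exfalso
      have := hsubset p.1 (show p.2 ∈ _ from h'.symm)
      simp only [Set.mem_setOf_eq, Prod.mk.eta] at this hp
      exact absurd hp (by rw [this]; exact not_le.mpr hx.1)
  · intro x hx y hy hxy
    have hxl := hα₀ x hx
    have hyl := hα₀ y hy
    obtain ⟨p, hp, hpe⟩ := hyl.1
    have : p ∈ {p : S × A | x ≤ Astar p} := le_trans hxy hp
    have := hxl.2 ⟨p, this, hpe⟩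
    linarith
  · intro p
    have hmem : Astar p ∈ Set.Icc (0:ℝ) Abar := ⟨hAstar_nonneg p, hAbar.2 ⟨p, rfl⟩⟩
    refine (hα₀ _ hmem).2 ⟨p, ?_, rfl⟩
    exact le_rfl (a := Astar p)
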